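/- arXiv:1006.4251 — 2 statements merged into one kernel-verified Lean document; each statement's English description precedes it below -/
import Mathlib

section
/- Let ⟨A, Δ⟩ be a Jordan coalgebra over a field k of characteristic not 2, with dual algebra A*. Then the linear space WIntDer(A*) of weakly inner derivations of A* is closed under the commutator [d₁, d₂] = d₁d₂ − d₂d₁; that is, WIntDer(A*) is a subalgebra of the Lie algebra Der(A*) of all derivations of A* under commutation. -/
open TensorProduct

variable {k : Type*} [Field k] {A : Type*} [AddCommGroup A] [Module k A]

/-- The multiplication on the dual space `A*` induced by a comultiplication `Δ`:
`⟨fg, a⟩ = Σ ⟨f, a₍₁₎⟩⟨g, a₍₂₎⟩`. -/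
noncomputable def dmul (Δ : A →ₗ[k] A ⊗[k] A) (f g : (A →ₗ[k] k)) : (A →ₗ[k] k) :=
  (TensorProduct.lid k k).toLinearMap ∘ₗ TensorProduct.map f g ∘ₗ Δ

/-- The left action `f·a = Σ a₍₁₎ ⟨f, a₍₂₎⟩` of the dual algebra on `A`. -/
noncomputable def lact (Δ : A →ₗ[k] A ⊗[k] A) (f : (A →ₗ[k] k)) : A →ₗ[k] A :=
  (TensorProduct.rid k A).toLinearMap ∘ₗ TensorProduct.map LinearMap.id f ∘ₗ Δ

/-- The right action `a·f = Σ ⟨f, a₍₁₎⟩ a₍₂₎` of the dual algebra on `A`. -/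
noncomputable def ract (Δ : A →ₗ[k] A ⊗[k] A) (f : (A →ₗ[k] k)) : A →ₗ[k] A :=
  (TensorProduct.lid k A).toLinearMap ∘ₗ TensorProduct.map f LinearMap.id ∘ₗ Δ

/-- `⟨A, Δ⟩` is a Jordan coalgebra: its dual algebra is commutative and satisfies
the Jordan identity `((ff)g)f = (ff)(gf)`. -/
def IsJordanCoalgebra (Δ : A →ₗ[k] A ⊗[k] A) : Prop :=
  (∀ f g : (A →ₗ[k] k), dmul Δ f g = dmul Δ g f) ∧
  (∀ f g : (A →ₗ[k] k),
    dmul Δ (dmul Δ (dmul Δ f f) g) f = dmul Δ (dmul Δ f f) (dmul Δ g f))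

/-- `B` is a subcoalgebra: `Δ(B) ⊆ B ⊗ B`. -/
def IsSubcoalgebra (Δ : A →ₗ[k] A ⊗[k] A) (B : Submodule k A) : Prop :=
  ∀ b ∈ B, Δ b ∈ LinearMap.range (TensorProduct.map B.subtype B.subtype)

/-- `B` is a coideal: `Δ(B) ⊆ B ⊗ A + A ⊗ B`. -/
def IsCoideal (Δ : A →ₗ[k] A ⊗[k] A) (B : Submodule k A) : Prop :=
  ∀ b ∈ B, Δ b ∈
    LinearMap.range (TensorProduct.map B.subtype (LinearMap.id (R := k) (M := A))) ⊔
    LinearMap.range (TensorProduct.map (LinearMap.id (R := k) (M := A)) B.subtype)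

/-- A derivation of the dual algebra `A*`. -/
def IsDerivation (Δ : A →ₗ[k] A ⊗[k] A)
    (d : (A →ₗ[k] k) →ₗ[k] (A →ₗ[k] k)) : Prop :=
  ∀ f g : (A →ₗ[k] k), d (dmul Δ f g) = dmul Δ (d f) g + dmul Δ f (d g)

theorem dmul_add_left (Δ : A →ₗ[k] A ⊗[k] A) (f₁ f₂ g : (A →ₗ[k] k)) :
    dmul Δ (f₁ + f₂) g = dmul Δ f₁ g + dmul Δ f₂ g := by
  unfold dmul; rw [TensorProduct.map_add_left]; ext a; simp

theorem dmul_add_right (Δ : A →ₗ[k] A ⊗[k] A) (f g₁ g₂ : (A →ₗ[k] k)) :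
    dmul Δ f (g₁ + g₂) = dmul Δ f g₁ + dmul Δ f g₂ := by
  unfold dmul; rw [TensorProduct.map_add_right]; ext a; simp

theorem dmul_smul_left (Δ : A →ₗ[k] A ⊗[k] A) (c : k) (f g : (A →ₗ[k] k)) :
    dmul Δ (c • f) g = c • dmul Δ f g := by
  unfold dmul; rw [TensorProduct.map_smul_left]; ext a; simp

theorem dmul_smul_right (Δ : A →ₗ[k] A ⊗[k] A) (c : k) (f g : (A →ₗ[k] k)) :
    dmul Δ f (c • g) = c • dmul Δ f g := by
  unfold dmul; rw [TensorProduct.map_smul_right]; ext a; simp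

theorem dmul_zero_left (Δ : A →ₗ[k] A ⊗[k] A) (g : (A →ₗ[k] k)) :
    dmul Δ (0 : (A →ₗ[k] k)) g = 0 := by
  ext a; simp [dmul]

theorem dmul_zero_right (Δ : A →ₗ[k] A ⊗[k] A) (f : (A →ₗ[k] k)) :
    dmul Δ f (0 : (A →ₗ[k] k)) = 0 := by
  ext a; simp [dmul]

/-- The operator of right multiplication `f' : g ↦ gf` on the dual algebra. -/
noncomputable def Rop (Δ : A →ₗ[k] A ⊗[k] A) (f : (A →ₗ[k] k)) :
    (A →ₗ[k] k) →ₗ[k] (A →ₗ[k] k) where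
  toFun g := dmul Δ g f
  map_add' g₁ g₂ := dmul_add_left Δ g₁ g₂ f
  map_smul' c g := dmul_smul_left Δ c g f

/-- The inner derivation `[f,g] = f'g' - g'f'` (in right-operator convention,
`x[f,g] = (xf)g - (xg)f`). -/
noncomputable def commD (Δ : A →ₗ[k] A ⊗[k] A) (f g : (A →ₗ[k] k)) :
    (A →ₗ[k] k) →ₗ[k] (A →ₗ[k] k) :=
  Rop Δ g ∘ₗ Rop Δ f - Rop Δ f ∘ₗ Rop Δ g

/-- The space of inner derivations of the dual algebra. -/
noncomputable def IntDer (Δ : A →ₗ[k] A ⊗[k] A) :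
    Submodule k ((A →ₗ[k] k) →ₗ[k] (A →ₗ[k] k)) :=
  Submodule.span k {d | ∃ f g : (A →ₗ[k] k), d = commD Δ f g}

/-- A weakly inner derivation of the dual algebra: a derivation that agrees with some
inner derivation on every finite-dimensional subcoalgebra. -/
def IsWIntDer (Δ : A →ₗ[k] A ⊗[k] A)
    (d : (A →ₗ[k] k) →ₗ[k] (A →ₗ[k] k)) : Prop :=
  IsDerivation Δ d ∧
  ∀ B : Submodule k A, IsSubcoalgebra Δ B → FiniteDimensional k B →
    ∃ i ∈ IntDer Δ, ∀ f : (A →ₗ[k] k), ∀ b ∈ B, d f b = i f b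

/-- The space of weakly inner derivations, as a submodule of `End(A*)`. -/
noncomputable def WIntDer (Δ : A →ₗ[k] A ⊗[k] A) :
    Submodule k ((A →ₗ[k] k) →ₗ[k] (A →ₗ[k] k)) where
  carrier := {d | IsWIntDer Δ d}
  zero_mem' := by
    refine ⟨fun f g => by simp [dmul_zero_left, dmul_zero_right],
      fun B hB hfin => ⟨0, Submodule.zero_mem _, fun f b hb => by simp⟩⟩
  add_mem' := by
    rintro d₁ d₂ ⟨hd₁, hw₁⟩ ⟨hd₂, hw₂⟩
    refine ⟨fun f g => ?_, fun B hB hfin => ?_⟩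
    · simp only [LinearMap.add_apply, hd₁ f g, hd₂ f g, dmul_add_left, dmul_add_right]
      abel
    · obtain ⟨i₁, hi₁, he₁⟩ := hw₁ B hB hfin
      obtain ⟨i₂, hi₂, he₂⟩ := hw₂ B hB hfin
      exact ⟨i₁ + i₂, Submodule.add_mem _ hi₁ hi₂, fun f b hb => by
        simp [LinearMap.add_apply, he₁ f b hb, he₂ f b hb]⟩
  smul_mem' := by
    rintro c d ⟨hd, hw⟩
    refine ⟨fun f g => ?_, fun B hB hfin => ?_⟩
    · simp only [LinearMap.smul_apply, hd f g, dmul_smul_left, dmul_smul_right, smul_add]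
    · obtain ⟨i, hi, he⟩ := hw B hB hfin
      exact ⟨c • i, Submodule.smul_mem _ c hi, fun f b hb => by
        simp [LinearMap.smul_apply, he f b hb]⟩


/-! ### Auxiliary lemmas for the proof -/

theorem dmul_sub_left (Δ : A →ₗ[k] A ⊗[k] A) (f₁ f₂ g : (A →ₗ[k] k)) :
    dmul Δ (f₁ - f₂) g = dmul Δ f₁ g - dmul Δ f₂ g := by
  rw [sub_eq_add_neg, sub_eq_add_neg, dmul_add_left, ← neg_one_smul k f₂, dmul_smul_left]
  module

theorem dmul_sub_right (Δ : A →ₗ[k] A ⊗[k] A) (f g₁ g₂ : (A →ₗ[k] k)) :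
    dmul Δ f (g₁ - g₂) = dmul Δ f g₁ - dmul Δ f g₂ := by
  rw [sub_eq_add_neg, sub_eq_add_neg, dmul_add_right, ← neg_one_smul k g₂, dmul_smul_right]
  module

theorem Rop_apply (Δ : A →ₗ[k] A ⊗[k] A) (f g : (A →ₗ[k] k)) :
    Rop Δ f g = dmul Δ g f := rfl

theorem commD_apply (Δ : A →ₗ[k] A ⊗[k] A) (a b g : (A →ₗ[k] k)) :
    commD Δ a b g = dmul Δ (dmul Δ g a) b - dmul Δ (dmul Δ g b) a := rfl

theorem JC_cancel2 {M : Type*} [AddCommGroup M] [Module k M] (h2 : (2 : k) ≠ 0)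
    {x y : M} (h : (2 : k) • x = (2 : k) • y) : x = y := by
  have := congrArg (fun v => (2 : k)⁻¹ • v) h
  simpa [smul_smul, inv_mul_cancel₀ h2] using this

/-- First partial linearization of the Jordan identity. -/
theorem JC_polar1 (h2 : (2 : k) ≠ 0) {Δ : A →ₗ[k] A ⊗[k] A} (hJ : IsJordanCoalgebra Δ)
    (x z y : (A →ₗ[k] k)) :
    dmul Δ (dmul Δ (dmul Δ x x) y) z + dmul Δ (dmul Δ (dmul Δ x z) y) x
      + dmul Δ (dmul Δ (dmul Δ z x) y) x
    = dmul Δ (dmul Δ x x) (dmul Δ y z) + dmul Δ (dmul Δ x z) (dmul Δ y x)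
      + dmul Δ (dmul Δ z x) (dmul Δ y x) := by
  have hp := hJ.2 (x + z) y
  have hm := hJ.2 (x - z) y
  have hz := hJ.2 z y
  simp only [dmul_add_left, dmul_add_right, dmul_sub_left, dmul_sub_right] at hp hm
  apply JC_cancel2 h2
  linear_combination (norm := module) hp - hm - (2 : k) • hz

/-- Full linearization of the Jordan identity (unmerged form). -/
theorem JC_linstar (h2 : (2 : k) ≠ 0) {Δ : A →ₗ[k] A ⊗[k] A} (hJ : IsJordanCoalgebra Δ)
    (p q r y : (A →ₗ[k] k)) :
    dmul Δ (dmul Δ (dmul Δ p q) y) r + dmul Δ (dmul Δ (dmul Δ q p) y) r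
      + dmul Δ (dmul Δ (dmul Δ p r) y) q + dmul Δ (dmul Δ (dmul Δ q r) y) p
      + dmul Δ (dmul Δ (dmul Δ r p) y) q + dmul Δ (dmul Δ (dmul Δ r q) y) p
    = dmul Δ (dmul Δ p q) (dmul Δ y r) + dmul Δ (dmul Δ q p) (dmul Δ y r)
      + dmul Δ (dmul Δ p r) (dmul Δ y q) + dmul Δ (dmul Δ q r) (dmul Δ y p)
      + dmul Δ (dmul Δ r p) (dmul Δ y q) + dmul Δ (dmul Δ r q) (dmul Δ y p) := by
  have h1 := JC_polar1 h2 hJ (p + q) r y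
  simp only [dmul_add_left, dmul_add_right] at h1
  linear_combination (norm := module) h1 - JC_polar1 h2 hJ p r y - JC_polar1 h2 hJ q r y

/-- Full linearization of the Jordan identity. -/
theorem JC_star (h2 : (2 : k) ≠ 0) {Δ : A →ₗ[k] A ⊗[k] A} (hJ : IsJordanCoalgebra Δ)
    (p q r y : (A →ₗ[k] k)) :
    dmul Δ (dmul Δ (dmul Δ p q) y) r + dmul Δ (dmul Δ (dmul Δ q r) y) p
      + dmul Δ (dmul Δ (dmul Δ r p) y) q
    = dmul Δ (dmul Δ p q) (dmul Δ y r) + dmul Δ (dmul Δ q r) (dmul Δ y p)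
      + dmul Δ (dmul Δ r p) (dmul Δ y q) := by
  have hc := hJ.1
  have h := JC_linstar h2 hJ p q r y
  rw [hc q p, hc r q, hc p r] at h
  apply JC_cancel2 h2
  linear_combination (norm := module) h

/-- In a Jordan coalgebra, each `commD a b` is a derivation of the dual algebra. -/
theorem JC_commD_isDer (h2 : (2 : k) ≠ 0) {Δ : A →ₗ[k] A ⊗[k] A}
    (hJ : IsJordanCoalgebra Δ) (a b : (A →ₗ[k] k)) :
    IsDerivation Δ (commD Δ a b) := by
  intro f g
  have hc := hJ.1
  have h1 := JC_star h2 hJ f g b a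
  have h3 := JC_star h2 hJ f g a b
  simp only [commD_apply, dmul_sub_left, dmul_sub_right]
  rw [hc f (dmul Δ (dmul Δ g a) b), hc f (dmul Δ (dmul Δ g b) a)]
  rw [hc b a] at h3
  rw [hc b f] at h1 h3
  rw [hc a f] at h1 h3
  rw [hc g b] at h1 ⊢
  rw [hc g a] at h3 ⊢
  rw [hc (dmul Δ f b) (dmul Δ a g)] at h1
  rw [hc (dmul Δ f a) (dmul Δ b g)] at h3
  linear_combination (norm := module) h1 - h3

/-- Every element of `IntDer` is a derivation. -/
theorem JC_intDer_isDer (h2 : (2 : k) ≠ 0) {Δ : A →ₗ[k] A ⊗[k] A}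
    (hJ : IsJordanCoalgebra Δ) {i : (A →ₗ[k] k) →ₗ[k] (A →ₗ[k] k)}
    (hi : i ∈ IntDer Δ) : IsDerivation Δ i := by
  refine Submodule.span_induction (fun x hx => ?_) (fun f g => ?_)
    (fun x y _ _ hx hy f g => ?_) (fun c x _ hx f g => ?_) hi
  · obtain ⟨u, v, rfl⟩ := hx
    exact JC_commD_isDer h2 hJ u v
  · simp [dmul_zero_left, dmul_zero_right]
  · simp only [LinearMap.add_apply, hx f g, hy f g, dmul_add_left, dmul_add_right]
    abel
  · simp only [LinearMap.smul_apply, hx f g, dmul_smul_left, dmul_smul_right, smul_add]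

/-- The commutator of a derivation with an inner derivation is inner. -/
theorem JC_der_comm_intDer {Δ : A →ₗ[k] A ⊗[k] A}
    {D i : (A →ₗ[k] k) →ₗ[k] (A →ₗ[k] k)} (hD : IsDerivation Δ D)
    (hi : i ∈ IntDer Δ) : D ∘ₗ i - i ∘ₗ D ∈ IntDer Δ := by
  refine Submodule.span_induction (fun x hx => ?_) ?_
    (fun x y _ _ hx hy => ?_) (fun c x _ hx => ?_) hi
  · obtain ⟨u, v, rfl⟩ := hx
    have key : D ∘ₗ commD Δ u v - commD Δ u v ∘ₗ D
        = commD Δ (D u) v + commD Δ u (D v) := by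
      refine LinearMap.ext fun g => ?_
      simp only [LinearMap.sub_apply, LinearMap.add_apply, LinearMap.comp_apply, commD_apply]
      rw [map_sub, hD (dmul Δ g u) v, hD (dmul Δ g v) u, hD g u, hD g v]
      simp only [dmul_add_left]
      abel
    rw [key]
    exact Submodule.add_mem _ (Submodule.subset_span ⟨D u, v, rfl⟩)
      (Submodule.subset_span ⟨u, D v, rfl⟩)
  · simp only [LinearMap.comp_zero, LinearMap.zero_comp, sub_zero]
    exact (sub_zero (0 : (A →ₗ[k] k) →ₗ[k] (A →ₗ[k] k))).symm ▸ Submodule.zero_mem (IntDer Δ)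
  · have : D ∘ₗ (x + y) - (x + y) ∘ₗ D = (D ∘ₗ x - x ∘ₗ D) + (D ∘ₗ y - y ∘ₗ D) := by
      ext g; simp; abel
    rw [this]; exact Submodule.add_mem _ hx hy
  · have : D ∘ₗ (c • x) - (c • x) ∘ₗ D = c • (D ∘ₗ x - x ∘ₗ D) := by
      ext g; simp [mul_sub]
    rw [this]; exact Submodule.smul_mem _ c hx

/-- If `u` and `v` agree on a subcoalgebra `B`, so do `u·h` and `v·h`. -/
theorem JC_dmul_agree {Δ : A →ₗ[k] A ⊗[k] A} {B : Submodule k A}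
    (hB : IsSubcoalgebra Δ B) {u v : (A →ₗ[k] k)} (huv : ∀ b ∈ B, u b = v b)
    (h : (A →ₗ[k] k)) : ∀ b ∈ B, dmul Δ u h b = dmul Δ v h b := by
  intro b hb
  obtain ⟨t, ht⟩ := hB b hb
  have hsub : u ∘ₗ B.subtype = v ∘ₗ B.subtype := LinearMap.ext fun x => huv x x.2
  have hmap : TensorProduct.map u h ((TensorProduct.map B.subtype B.subtype) t)
      = TensorProduct.map v h ((TensorProduct.map B.subtype B.subtype) t) := by
    rw [← LinearMap.comp_apply, ← LinearMap.comp_apply, ← TensorProduct.map_comp,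
      ← TensorProduct.map_comp]
    have h1 : h ∘ₗ B.subtype = h ∘ₗ B.subtype := rfl
    rw [hsub]
  simp only [dmul, LinearMap.comp_apply, LinearEquiv.coe_coe]
  rw [← ht, hmap]

/-- If `u` and `v` agree on a subcoalgebra `B` and `i` is inner, then `i u` and `i v`
agree on `B`. -/
theorem JC_apply_agree {Δ : A →ₗ[k] A ⊗[k] A} {B : Submodule k A}
    (hB : IsSubcoalgebra Δ B) {i : (A →ₗ[k] k) →ₗ[k] (A →ₗ[k] k)}
    (hi : i ∈ IntDer Δ) {u v : (A →ₗ[k] k)} (huv : ∀ b ∈ B, u b = v b) :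
    ∀ b ∈ B, i u b = i v b := by
  refine Submodule.span_induction (fun x hx => ?_) (fun b hb => by simp)
    (fun x y _ _ hx hy b hb => ?_) (fun c x _ hx b hb => ?_) hi
  · obtain ⟨cc, dd, rfl⟩ := hx
    intro b hb
    have a1 := JC_dmul_agree hB huv cc
    have a2 := JC_dmul_agree hB a1 dd b hb
    have a3 := JC_dmul_agree hB huv dd
    have a4 := JC_dmul_agree hB a3 cc b hb
    simp only [commD_apply, LinearMap.sub_apply, a2, a4]
  · simp only [LinearMap.add_apply, LinearMap.add_apply, hx b hb, hy b hb]
  · simp only [LinearMap.smul_apply, LinearMap.smul_apply, hx b hb]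

/-- **Lemma 1.** For a Jordan coalgebra `⟨A, Δ⟩` over a field of characteristic not 2,
the space of weakly inner derivations of the dual algebra `A*` is closed under the
commutator `[d₁, d₂] = d₁d₂ - d₂d₁` (right-operator convention), i.e. it is a
subalgebra of the Lie algebra `Der(A*)`. -/
theorem wIntDer_comm_closed {k : Type*} [Field k] {A : Type*} [AddCommGroup A] [Module k A]
    (h2 : (2 : k) ≠ 0) (Δ : A →ₗ[k] A ⊗[k] A) (hJ : IsJordanCoalgebra Δ)
    (d₁ d₂ : (A →ₗ[k] k) →ₗ[k] (A →ₗ[k] k))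
    (h₁ : IsWIntDer Δ d₁) (h₂ : IsWIntDer Δ d₂) :
    IsWIntDer Δ (d₂ ∘ₗ d₁ - d₁ ∘ₗ d₂) := by
  constructor
  · intro f g
    simp only [LinearMap.sub_apply, LinearMap.comp_apply]
    rw [h₁.1 f g, h₂.1 f g, map_add, map_add, h₂.1 (d₁ f) g, h₂.1 f (d₁ g),
      h₁.1 (d₂ f) g, h₁.1 f (d₂ g), dmul_sub_left, dmul_sub_right]
    abel
  · intro B hB hfin
    obtain ⟨i₁, hi₁, he₁⟩ := h₁.2 B hB hfin
    obtain ⟨i₂, hi₂, he₂⟩ := h₂.2 B hB hfin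
    refine ⟨i₂ ∘ₗ i₁ - i₁ ∘ₗ i₂, JC_der_comm_intDer (JC_intDer_isDer h2 hJ hi₂) hi₁, ?_⟩
    intro f b hb
    simp only [LinearMap.sub_apply, LinearMap.comp_apply]
    rw [he₂ (d₁ f) b hb, JC_apply_agree hB hi₂ (fun b hb => he₁ f b hb) b hb,
      he₁ (d₂ f) b hb, JC_apply_agree hB hi₁ (fun b hb => he₂ f b hb) b hb]
end

section
/- Let ⟨A, Δ⟩ be a Jordan coalgebra over a field k of characteristic not 2 whose dual algebra A* is unital, and let B be a subcoalgebra of ⟨A, Δ⟩. Then Ann(B) = B^⊥, and [B^⊥, B] = 0 as operators on the null extension C = A* ⊕ A. Moreover, if B is finite-dimensional, then the space [A*, B] is finite-dimensional. -/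
open TensorProduct

variable {k : Type*} [Field k] {A : Type*} [AddCommGroup A] [Module k A]

/-- Multiplication in the null extension `C = A* ⊕ A`. -/
noncomputable def cmul (Δ : A →ₗ[k] A ⊗[k] A) (x y : (A →ₗ[k] k) × A) :
    (A →ₗ[k] k) × A :=
  (dmul Δ x.1 y.1, lact Δ x.1 y.2 + lact Δ y.1 x.2)

theorem lact_add_left (Δ : A →ₗ[k] A ⊗[k] A) (f₁ f₂ : (A →ₗ[k] k)) (a : A) :
    lact Δ (f₁ + f₂) a = lact Δ f₁ a + lact Δ f₂ a := by
  simp [lact, TensorProduct.map_add_right]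

theorem lact_smul_left (Δ : A →ₗ[k] A ⊗[k] A) (c : k) (f : (A →ₗ[k] k)) (a : A) :
    lact Δ (c • f) a = c • lact Δ f a := by
  simp [lact, TensorProduct.map_smul_right]

/-- Right multiplication by an element of the null extension `C = A* ⊕ A`,
as a linear operator on `C`. -/
noncomputable def RopC (Δ : A →ₗ[k] A ⊗[k] A) (x : (A →ₗ[k] k) × A) :
    ((A →ₗ[k] k) × A) →ₗ[k] ((A →ₗ[k] k) × A) where
  toFun y := cmul Δ y x
  map_add' y z := by
    simp only [cmul, Prod.fst_add, Prod.snd_add, Prod.mk_add_mk, dmul_add_left,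
      lact_add_left, map_add]
    rw [Prod.mk.injEq]
    constructor
    · rfl
    · abel
  map_smul' c y := by
    simp only [cmul, Prod.smul_fst, Prod.smul_snd, Prod.smul_mk, dmul_smul_left,
      lact_smul_left, map_smul, RingHom.id_apply, smul_add]

/-- The operator `[x,y] = x'y' - y'x'` on the null extension `C`
(right-operator convention: `z[x,y] = (zx)y - (zy)x`). -/
noncomputable def commC (Δ : A →ₗ[k] A ⊗[k] A) (x y : (A →ₗ[k] k) × A) :
    ((A →ₗ[k] k) × A) →ₗ[k] ((A →ₗ[k] k) × A) :=
  RopC Δ y ∘ₗ RopC Δ x - RopC Δ x ∘ₗ RopC Δ y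

/-- The mixed commutator operator `[f,a]` on `C`, for `f ∈ A*` and `a ∈ A`. -/
noncomputable def commMixed (Δ : A →ₗ[k] A ⊗[k] A) (f : (A →ₗ[k] k)) (a : A) :
    ((A →ₗ[k] k) × A) →ₗ[k] ((A →ₗ[k] k) × A) :=
  commC Δ (f, 0) (0, a)

/-- The space `[A*, A]`, spanned by the mixed commutators, inside `End(C)`. -/
noncomputable def CommAA (Δ : A →ₗ[k] A ⊗[k] A) :
    Submodule k (((A →ₗ[k] k) × A) →ₗ[k] ((A →ₗ[k] k) × A)) :=
  Submodule.span k {u | ∃ (f : (A →ₗ[k] k)) (a : A), u = commMixed Δ f a}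

theorem lact_zero_left' (Δ : A →ₗ[k] A ⊗[k] A) (a : A) :
    lact Δ (0 : A →ₗ[k] k) a = 0 := by
  have h := lact_smul_left Δ (0 : k) (0 : A →ₗ[k] k) a
  simpa using h

theorem dmul_eval (Δ : A →ₗ[k] A ⊗[k] A) (g f : A →ₗ[k] k) (a : A) :
    dmul Δ g f a = g (lact Δ f a) := by
  simp only [dmul, lact, LinearMap.comp_apply]
  induction Δ a using TensorProduct.induction_on with
  | zero => simp
  | tmul x y => simp [smul_eq_mul, mul_comm]
  | add u v hu hv => simp_all

theorem lact_ann {Δ : A →ₗ[k] A ⊗[k] A} {B : Submodule k A}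
    (hB : IsSubcoalgebra Δ B) {f : A →ₗ[k] k} (hf : f ∈ B.dualAnnihilator)
    {b : A} (hb : b ∈ B) : lact Δ f b = 0 := by
  obtain ⟨t, ht⟩ := hB b hb
  simp only [lact, LinearMap.comp_apply]
  rw [← ht]; clear ht
  induction t using TensorProduct.induction_on with
  | zero => simp
  | tmul x y =>
      have : f (y : A) = 0 := (Submodule.mem_dualAnnihilator f).mp hf _ y.2
      simp [this]
  | add u v hu hv => simp_all

theorem lact_mem {Δ : A →ₗ[k] A ⊗[k] A} {B : Submodule k A}
    (hB : IsSubcoalgebra Δ B) (g : A →ₗ[k] k) {b : A} (hb : b ∈ B) :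
    lact Δ g b ∈ B := by
  obtain ⟨t, ht⟩ := hB b hb
  simp only [lact, LinearMap.comp_apply]
  rw [← ht]; clear ht
  induction t using TensorProduct.induction_on with
  | zero => simp
  | tmul x y => simpa using B.smul_mem (g (y : A)) x.2
  | add u v hu hv =>
      rw [map_add, map_add, map_add]
      exact B.add_mem hu hv

theorem commC_mixed_apply (Δ : A →ₗ[k] A ⊗[k] A) (f : A →ₗ[k] k) (b : A)
    (z : (A →ₗ[k] k) × A) :
    commC Δ ((f, 0) : (A →ₗ[k] k) × A) ((0, b) : (A →ₗ[k] k) × A) z =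
      (0, lact Δ (dmul Δ z.1 f) b - lact Δ f (lact Δ z.1 b)) := by
  simp [commC, RopC, cmul, dmul_zero_right, dmul_zero_left, lact_zero_left',
    Prod.ext_iff]

theorem commC_ann_zero {Δ : A →ₗ[k] A ⊗[k] A} {B : Submodule k A}
    (hB : IsSubcoalgebra Δ B) {f : A →ₗ[k] k} (hf : f ∈ B.dualAnnihilator)
    {b : A} (hb : b ∈ B) :
    commC Δ ((f, 0) : (A →ₗ[k] k) × A) ((0, b) : (A →ₗ[k] k) × A) = 0 := by
  apply LinearMap.ext
  intro z
  rw [commC_mixed_apply]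
  have h1 : lact Δ (dmul Δ z.1 f) b = 0 := by
    refine lact_ann hB ?_ hb
    rw [Submodule.mem_dualAnnihilator]
    intro w hw
    rw [dmul_eval, lact_ann hB hf hw, map_zero]
  have h2 : lact Δ f (lact Δ z.1 b) = 0 := lact_ann hB hf (lact_mem hB z.1 hb)
  simp [h1, h2]

/-- The bilinear map `(f, a) ↦ [f, a]` giving the explicit form of the mixed
commutator operator on `C`. -/
noncomputable def mixBil (Δ : A →ₗ[k] A ⊗[k] A) :
    (A →ₗ[k] k) →ₗ[k] A →ₗ[k] (((A →ₗ[k] k) × A) →ₗ[k] ((A →ₗ[k] k) × A)) :=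
  LinearMap.mk₂ k
    (fun f a =>
      { toFun := fun z => ((0 : A →ₗ[k] k),
          lact Δ (dmul Δ z.1 f) a - lact Δ f (lact Δ z.1 a))
        map_add' := fun z w => by
          simp only [Prod.fst_add, Prod.snd_add, dmul_add_left, lact_add_left,
            map_add, Prod.mk_add_mk, Prod.ext_iff]
          constructor
          · simp
          · abel
        map_smul' := fun c z => by
          simp only [Prod.smul_fst, Prod.smul_snd, dmul_smul_left, lact_smul_left,
            map_smul, RingHom.id_apply, Prod.smul_mk, smul_sub, Prod.ext_iff]
          simp })
    (fun f g a => by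
      apply LinearMap.ext; intro z
      simp only [LinearMap.coe_mk, AddHom.coe_mk, LinearMap.add_apply,
        dmul_add_right, lact_add_left, Prod.mk_add_mk, Prod.ext_iff]
      constructor
      · simp
      · abel)
    (fun c f a => by
      apply LinearMap.ext; intro z
      simp only [LinearMap.coe_mk, AddHom.coe_mk, LinearMap.smul_apply,
        dmul_smul_right, lact_smul_left, map_smul, Prod.smul_mk, smul_sub,
        Prod.ext_iff]
      simp)
    (fun f a b => by
      apply LinearMap.ext; intro z
      simp only [LinearMap.coe_mk, AddHom.coe_mk, LinearMap.add_apply, map_add,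
        lact_add_left, Prod.mk_add_mk, Prod.ext_iff]
      constructor
      · simp
      · abel)
    (fun c f a => by
      apply LinearMap.ext; intro z
      simp only [LinearMap.coe_mk, AddHom.coe_mk, LinearMap.smul_apply, map_smul,
        lact_smul_left, Prod.smul_mk, smul_sub, Prod.ext_iff]
      simp)

theorem commC_eq_mixBil (Δ : A →ₗ[k] A ⊗[k] A) (f : A →ₗ[k] k) (b : A) :
    commC Δ ((f, 0) : (A →ₗ[k] k) × A) ((0, b) : (A →ₗ[k] k) × A) =
      mixBil Δ f b := by
  apply LinearMap.ext
  intro z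
  rw [commC_mixed_apply]
  rfl

/-- **Proposition 1.** Let `⟨A, Δ⟩` be a Jordan coalgebra (char k ≠ 2) with unital dual
algebra `A*`, and let `B` be a subcoalgebra. Then `Ann(B) = B^⊥`; the span of the
commutator operators `[f, b]` (`f ∈ B^⊥`, `b ∈ B`) on the null extension `C = A* ⊕ A`
is zero; and if `B` is finite-dimensional then the space `[A*, B]` is finite-dimensional. -/
theorem prop1_ann_comm {k : Type*} [Field k] {A : Type*} [AddCommGroup A] [Module k A]
    (h2 : (2 : k) ≠ 0) (Δ : A →ₗ[k] A ⊗[k] A) (hJ : IsJordanCoalgebra Δ)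
    (one : A →ₗ[k] k) (hone : ∀ f, dmul Δ one f = f ∧ dmul Δ f one = f)
    (B : Submodule k A) (hB : IsSubcoalgebra Δ B) :
    {f : A →ₗ[k] k | ∀ b ∈ B, lact Δ f b = 0} = (B.dualAnnihilator : Set (A →ₗ[k] k)) ∧
    Submodule.span k {u | ∃ f ∈ B.dualAnnihilator, ∃ b ∈ B,
        u = commC Δ ((f, 0) : (A →ₗ[k] k) × A) ((0, b) : (A →ₗ[k] k) × A)} = ⊥ ∧
    (FiniteDimensional k B →
      Module.Finite k (Submodule.span k {u | ∃ (f : A →ₗ[k] k), ∃ b ∈ B,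
        u = commC Δ ((f, 0) : (A →ₗ[k] k) × A) ((0, b) : (A →ₗ[k] k) × A)})) := by
  refine ⟨?_, ?_, ?_⟩
  · -- Ann(B) = B^⊥
    ext f
    simp only [Set.mem_setOf_eq, SetLike.mem_coe, Submodule.mem_dualAnnihilator]
    constructor
    · intro h b hb
      have h1 : dmul Δ one f b = one (lact Δ f b) := dmul_eval Δ one f b
      rw [(hone f).1, h b hb, map_zero] at h1
      exact h1
    · intro h b hb
      exact lact_ann hB ((Submodule.mem_dualAnnihilator f).mpr h) hb
  · -- [B^⊥, B] = 0
    rw [Submodule.span_eq_bot]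
    rintro u ⟨f, hf, b, hb, rfl⟩
    exact commC_ann_zero hB hf hb
  · -- finite-dimensionality
    intro hfin
    -- choose a complement W to B^⊥ in A*
    obtain ⟨W, hW⟩ := Submodule.exists_isCompl (B.dualAnnihilator)
    have hWfin : FiniteDimensional k W := by
      have e1 : (Module.Dual k A ⧸ B.dualAnnihilator) ≃ₗ[k] Module.Dual k B :=
        Subspace.quotAnnihilatorEquiv B
      have e2 : (Module.Dual k A ⧸ B.dualAnnihilator) ≃ₗ[k] W :=
        Submodule.quotientEquivOfIsCompl _ _ hW
      haveI : FiniteDimensional k (Module.Dual k B) := inferInstance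
      haveI : FiniteDimensional k (Module.Dual k A ⧸ B.dualAnnihilator) :=
        LinearEquiv.finiteDimensional e1.symm
      exact LinearEquiv.finiteDimensional e2
    set T : W →ₗ[k] B →ₗ[k] (((A →ₗ[k] k) × A) →ₗ[k] ((A →ₗ[k] k) × A)) :=
      ((mixBil Δ).comp W.subtype).compl₂ B.subtype with hT
    have hle : Submodule.span k {u | ∃ (f : A →ₗ[k] k), ∃ b ∈ B,
        u = commC Δ ((f, 0) : (A →ₗ[k] k) × A) ((0, b) : (A →ₗ[k] k) × A)} ≤
        LinearMap.range (TensorProduct.lift T) := by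
      rw [Submodule.span_le]
      rintro u ⟨f, b, hb, rfl⟩
      have hf : f ∈ B.dualAnnihilator ⊔ W := by rw [hW.sup_eq_top]; trivial
      obtain ⟨y, hy, z, hz, hyz⟩ := Submodule.mem_sup.mp hf
      rw [SetLike.mem_coe, LinearMap.mem_range]
      refine ⟨(⟨z, hz⟩ : W) ⊗ₜ[k] (⟨b, hb⟩ : B), ?_⟩
      rw [TensorProduct.lift.tmul]
      have hy0 : mixBil Δ y b = 0 := by
        rw [← commC_eq_mixBil]
        exact commC_ann_zero hB hy hb
      have hc : commC Δ ((f, 0) : (A →ₗ[k] k) × A) ((0, b) : (A →ₗ[k] k) × A) =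
          mixBil Δ z b := by
        rw [commC_eq_mixBil, ← hyz, map_add, LinearMap.add_apply, hy0, zero_add]
      rw [hc]
      rfl
    have : Module.Finite k (LinearMap.range (TensorProduct.lift T)) := by
      haveI : Module.Finite k (W ⊗[k] B) := inferInstance
      exact Module.Finite.range _
    letI instACG : AddCommGroup (((A →ₗ[k] k) × A) →ₗ[k] ((A →ₗ[k] k) × A)) := LinearMap.addCommGroup
    exact Module.Finite.iff_fg.mpr (Submodule.FG.of_le (Module.Finite.iff_fg.mp this) hle)
end
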